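/- Let U be a controlled unitary U = Σ_z Π_z ⊗ V(z) as above, with conjugation by U a QCA of range R, and let S be a union of tiles and T a tile disjoint from S. Then conjugation by U_{S∪T} is also a QCA of range R. -/
import Mathlib


/-!
STATEMENT 2: with `U = Σ_z Π_z ⊗ V(z)` a controlled unitary whose conjugation is a QCA of
range `R` (defined, per Lemma `uqca`, by the two conditions on `(V_z)† V_{z+i}`), and `S` a
union of tiles and `T` a tile disjoint from `S`, conjugation by `U_{S∪T}` is also a QCA of
range `R` (i.e. the restricted family `z ↦ V(z_{S∪T})` satisfies the same two conditions).
-/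
noncomputable section

open Matrix

/-- operators on a collection `K` of qubits -/
abbrev Op (K : Type*) [Fintype K] [DecidableEq K] : Type _ :=
  Matrix (K → Bool) (K → Bool) ℂ

/-- `O` is supported on the region `T` -/
def SupportedOn {K : Type*} [Fintype K] [DecidableEq K] (O : Op K) (T : Set K) : Prop :=
  (∀ a b : K → Bool, O a b ≠ 0 → ∀ k ∉ T, a k = b k) ∧
  (∀ a b a' b' : K → Bool, (∀ k ∈ T, a k = a' k) → (∀ k ∈ T, b k = b' k) →
    (∀ k ∉ T, a k = b k) → (∀ k ∉ T, a' k = b' k) → O a b = O a' b')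

/-- conjugation by the unitary `U` is a quantum cellular automaton of range `R`
with respect to the distance function `d` -/
def IsQCA {K : Type*} [Fintype K] [DecidableEq K] (d : K → K → ℝ) (U : Op K) (R : ℝ) : Prop :=
  U ∈ unitary (Op K) ∧
  ∀ k : K, ∀ O : Op K, SupportedOn O {k} →
    SupportedOn (star U * O * U) {k' : K | d k k' ≤ R}
variable {S Mi : Type*} [Fintype S] [DecidableEq S] [Fintype Mi] [DecidableEq Mi]

/-- the controlled unitary `Σ_z Π^spin_z ⊗ V_z` on spins (`S`) and material (`Mi`) -/
def controlled (V : (S → Bool) → Op Mi) : Op (S ⊕ Mi) :=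
  fun a b => if (fun s => a (Sum.inl s)) = (fun s => b (Sum.inl s))
    then V (fun s => a (Sum.inl s)) (fun m => a (Sum.inr m)) (fun m => b (Sum.inr m))
    else 0

/-- the spin configuration `z + i`: flip spin `i` in `z` -/
def flipAt {S : Type*} [DecidableEq S] (z : S → Bool) (i : S) : S → Bool :=
  Function.update z i (!(z i))

open scoped Classical in
/-- the configuration `z_A`, agreeing with `z` on `A` and equal to `+1` (true) off `A` -/
def restrictTo {S : Type*} (A : Set S) (z : S → Bool) : S → Bool :=
  fun s => if s ∈ A then z s else true

/-- the two conditions of Lemma `uqca` defining "conjugation by the controlled unitary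
`Σ_z Π_z ⊗ V_z` is a QCA of range `R`" -/
def ControlledConds {S Mi : Type*} [Fintype S] [DecidableEq S] [Fintype Mi] [DecidableEq Mi]
    (d : (S ⊕ Mi) → (S ⊕ Mi) → ℝ) (R : ℝ) (V : (S → Bool) → Op Mi) : Prop :=
  (∀ z, V z ∈ unitary (Op Mi)) ∧
  ∀ (z : S → Bool) (i : S),
    SupportedOn (star (V z) * V (flipAt z i))
      {m : Mi | d (Sum.inl i) (Sum.inr m) ≤ R} ∧
    ∀ j : S, R < d (Sum.inl i) (Sum.inl j) →
      star (V z) * V (flipAt z i) =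
        star (V (flipAt z j)) * V (flipAt (flipAt z i) j)

/-- restriction commutes with flipping a spin inside the set -/
lemma restrictTo_flip_mem {A : Set S} {i : S} (hi : i ∈ A) (z : S → Bool) :
    restrictTo A (flipAt z i) = flipAt (restrictTo A z) i := by
  classical
  funext s
  by_cases hs : s = i
  · subst hs
    simp [restrictTo, flipAt, hi]
  · simp [restrictTo, flipAt, Function.update_of_ne hs]

/-- restriction ignores flips outside the set -/
lemma restrictTo_flip_notMem {A : Set S} {i : S} (hi : i ∉ A) (z : S → Bool) :
    restrictTo A (flipAt z i) = restrictTo A z := by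
  classical
  funext s
  by_cases hs : s = i
  · subst hs
    simp [restrictTo, hi]
  · simp [restrictTo, flipAt, Function.update_of_ne hs]

/-- the identity is supported on any region -/
lemma supportedOn_one {K : Type*} [Fintype K] [DecidableEq K] (T : Set K) :
    SupportedOn (1 : Op K) T := by
  constructor
  · intro a b hab k _
    by_cases h : a = b
    · rw [h]
    · exact absurd (Matrix.one_apply_ne h) hab
  · intro a b a' b' hT hT' hout hout'
    by_cases h : a = b
    · have h' : a' = b' := by
        funext k
        by_cases hk : k ∈ T
        · rw [← hT k hk, ← hT' k hk, h]
        · exact hout' k hk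
      rw [h, h', Matrix.one_apply_eq, Matrix.one_apply_eq]
    · have h' : a' ≠ b' := by
        intro heq
        apply h
        funext k
        by_cases hk : k ∈ T
        · rw [hT k hk, hT' k hk, heq]
        · exact hout k hk
      rw [Matrix.one_apply_ne h, Matrix.one_apply_ne h']

/-- the general fact: restricting to ANY set of spins preserves the two conditions -/
lemma controlledConds_restrict
    (d : (S ⊕ Mi) → (S ⊕ Mi) → ℝ) (R : ℝ)
    (V : (S → Bool) → Op Mi)
    (hconds : ControlledConds d R V) (A : Set S) :
    ControlledConds d R (fun z => V (restrictTo A z)) := by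
  obtain ⟨hu, hmain⟩ := hconds
  refine ⟨fun z => hu _, fun z i => ?_⟩
  have hone : ∀ w, star (V w) * V w = 1 := fun w => ((Unitary.mem_iff).mp (hu w)).1
  beta_reduce
  by_cases hi : i ∈ A
  · rw [restrictTo_flip_mem hi]
    refine ⟨(hmain (restrictTo A z) i).1, fun j hj => ?_⟩
    by_cases hjA : j ∈ A
    · have := (hmain (restrictTo A z) i).2 j hj
      rw [restrictTo_flip_mem hjA, restrictTo_flip_mem hjA, restrictTo_flip_mem hi]
      exact this
    · rw [restrictTo_flip_notMem hjA, restrictTo_flip_notMem hjA,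
        restrictTo_flip_mem hi]
  · rw [restrictTo_flip_notMem hi, hone]
    refine ⟨supportedOn_one _, fun j hj => ?_⟩
    by_cases hjA : j ∈ A
    · rw [restrictTo_flip_mem hjA, restrictTo_flip_mem hjA, restrictTo_flip_notMem hi, hone]
    · rw [restrictTo_flip_notMem hjA, restrictTo_flip_notMem hjA,
        restrictTo_flip_notMem hi, hone]

theorem stmt_2
    {Tile : Type*}
    (d : (S ⊕ Mi) → (S ⊕ Mi) → ℝ) (R : ℝ) (hR : 0 < R)
    (V : (S → Bool) → Op Mi)
    (hconds : ControlledConds d R V)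
    (tile : Tile → Set S)
    (hpart : ∀ s : S, ∃! t : Tile, s ∈ tile t) :
    ∀ (𝒮 : Set Tile) (T : Tile), T ∉ 𝒮 →
      ControlledConds d R (fun z => V (restrictTo (⋃ t ∈ (𝒮 ∪ {T}), tile t) z)) := by
  intro 𝒮 T _
  exact controlledConds_restrict d R V hconds _

end
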